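/- Let $X = (\mathbb{R}^n, \|\cdot\|)$ be a real Banach space with an absolute norm, and let $\tilde{X} = (\mathbb{C}^n, \|\cdot\|_\mathbb{C})$ be its complexification with norm $\|(z_1,\dots,z_n)\|_\mathbb{C} = \|(|z_1|,\dots,|z_n|)\|$. Then a point $x \in \mathbb{R}^n$ is an extreme point of the unit ball of $X$ if and only if $x$ (viewed in $\mathbb{C}^n$) is an extreme point of the unit ball of $\tilde{X}$. -/

import Mathlib

/-- One-coordinate monotonicity step for an absolute norm. -/
lemma abs_norm_step (n : ℕ) (N : (Fin n → ℝ) → ℝ)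
    (hadd : ∀ x y : Fin n → ℝ, N (x + y) ≤ N x + N y)
    (hsmul : ∀ (c : ℝ) (x : Fin n → ℝ), N (c • x) = |c| * N x)
    (habs : ∀ x : Fin n → ℝ, N x = N (fun j => |x j|))
    (w : Fin n → ℝ) (j : Fin n) (c d : ℝ) (h : |c| ≤ d) :
    N (Function.update w j c) ≤ N (Function.update w j d) := by
  have hd : 0 ≤ d := (abs_nonneg c).trans h
  rcases eq_or_lt_of_le hd with hd0 | hd0
  · have hc : c = 0 := abs_nonneg c |>.antisymm' (by simpa [← hd0] using h) |> abs_eq_zero.mp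
    rw [hc, ← hd0]
  · set lam : ℝ := (d + c) / (2 * d) with hlam
    set mu : ℝ := (d - c) / (2 * d) with hmu
    have hcd : -d ≤ c ∧ c ≤ d := abs_le.mp h
    have hlam0 : 0 ≤ lam := by
      apply div_nonneg (by linarith [hcd.1]) (by linarith)
    have hmu0 : 0 ≤ mu := by
      apply div_nonneg (by linarith [hcd.2]) (by linarith)
    have hsum : lam + mu = 1 := by
      rw [hlam, hmu]; field_simp; ring
    have hdecomp : Function.update w j c =
        lam • Function.update w j d + mu • Function.update w j (-d) := by
      funext k
      by_cases hk : k = j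
      · subst hk
        simp only [Pi.add_apply, Pi.smul_apply, Function.update_self, smul_eq_mul]
        rw [hlam, hmu]; field_simp
        ring
      · simp only [Pi.add_apply, Pi.smul_apply, Function.update_of_ne hk, smul_eq_mul]
        have : (lam + mu) * w k = w k := by rw [hsum]; ring
        linarith [this]
    have habs_eq : N (Function.update w j (-d)) = N (Function.update w j d) := by
      rw [habs (Function.update w j (-d)), habs (Function.update w j d)]
      congr 1
      funext k
      by_cases hk : k = j
      · subst hk; simp [abs_of_nonneg hd]
      · simp [Function.update_of_ne hk]
    calc N (Function.update w j c)
        ≤ N (lam • Function.update w j d) + N (mu • Function.update w j (-d)) := by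
          rw [hdecomp]; exact hadd _ _
      _ = lam * N (Function.update w j d) + mu * N (Function.update w j (-d)) := by
          rw [hsmul, hsmul, abs_of_nonneg hlam0, abs_of_nonneg hmu0]
      _ = N (Function.update w j d) := by
          rw [habs_eq]
          have : (lam + mu) * N (Function.update w j d) = N (Function.update w j d) := by
            rw [hsum]; ring
          linarith [this]

/-- Monotonicity of an absolute norm. -/
lemma abs_norm_mono (n : ℕ) (N : (Fin n → ℝ) → ℝ)
    (hadd : ∀ x y : Fin n → ℝ, N (x + y) ≤ N x + N y)
    (hsmul : ∀ (c : ℝ) (x : Fin n → ℝ), N (c • x) = |c| * N x)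
    (habs : ∀ x : Fin n → ℝ, N x = N (fun j => |x j|))
    (a c : Fin n → ℝ) (h : ∀ j, |a j| ≤ c j) : N a ≤ N c := by
  have key : ∀ s : Finset (Fin n), N (fun j => if j ∈ s then a j else c j) ≤ N c := by
    intro s
    induction s using Finset.induction_on with
    | empty => simp
    | @insert j s hj ih =>
      have e1 : (fun k => if k ∈ insert j s then a k else c k) =
          Function.update (fun k => if k ∈ s then a k else c k) j (a j) := by
        funext k
        by_cases hk : k = j
        · subst hk; simp
        · simp [Function.update_of_ne hk, hk]
      have e2 : (fun k => if k ∈ s then a k else c k) =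
          Function.update (fun k => if k ∈ s then a k else c k) j (c j) := by
        funext k
        by_cases hk : k = j
        · subst hk; simp [hj]
        · simp [Function.update_of_ne hk]
      calc N (fun k => if k ∈ insert j s then a k else c k)
          ≤ N (Function.update (fun k => if k ∈ s then a k else c k) j (c j)) := by
            rw [e1]; exact abs_norm_step n N hadd hsmul habs _ j _ _ (h j)
        _ = N (fun k => if k ∈ s then a k else c k) := by rw [← e2]
        _ ≤ N c := ih
  simpa using key Finset.univ

theorem stmt_3 (n : ℕ) (N : (Fin n → ℝ) → ℝ)
    (hadd : ∀ x y : Fin n → ℝ, N (x + y) ≤ N x + N y)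
    (hsmul : ∀ (c : ℝ) (x : Fin n → ℝ), N (c • x) = |c| * N x)
    (habs : ∀ x : Fin n → ℝ, N x = N (fun j => |x j|))
    (hunit : ∀ j : Fin n, N (Pi.single j 1) = 1)
    (Nc : (Fin n → ℂ) → ℝ) (hNc : ∀ z : Fin n → ℂ, Nc z = N (fun j => ‖z j‖))
    (x : Fin n → ℝ) (hx : N x ≤ 1) :
    ((∀ y z : Fin n → ℝ, N y ≤ 1 → N z ≤ 1 → y + z = (2 : ℝ) • x → y = x ∧ z = x) ↔
     (∀ y z : Fin n → ℂ, Nc y ≤ 1 → Nc z ≤ 1 →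
        y + z = (2 : ℂ) • (fun j => ((x j : ℝ) : ℂ)) →
        (y = fun j => ((x j : ℝ) : ℂ)) ∧ (z = fun j => ((x j : ℝ) : ℂ)))) := by
  have mono := abs_norm_mono n N hadd hsmul habs
  constructor
  · -- forward: real extreme → complex extreme
    intro hext y z hy hz hsum
    -- real parts
    set a : Fin n → ℝ := fun j => (y j).re with ha
    set b : Fin n → ℝ := fun j => (z j).re with hb
    have hNa : N a ≤ 1 :=
      le_trans (mono a (fun j => ‖y j‖)
        (fun j => by simpa using Complex.abs_re_le_norm (y j)))
        (by rw [← hNc y]; exact hy)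
    have hNb : N b ≤ 1 :=
      le_trans (mono b (fun j => ‖z j‖)
        (fun j => by simpa using Complex.abs_re_le_norm (z j)))
        (by rw [← hNc z]; exact hz)
    have hsum' : a + b = (2 : ℝ) • x := by
      funext j
      have := congrFun hsum j
      have := congrArg Complex.re this
      simpa [ha, hb] using this
    obtain ⟨hax, hbx⟩ := hext a b hNa hNb hsum'
    -- imaginary parts
    set u : Fin n → ℝ := fun j => ‖y j‖ with hu
    have hu0 : ∀ j, 0 ≤ u j := fun j => norm_nonneg _
    have hxu : ∀ j, |x j| ≤ u j := by
      intro j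
      have : |(y j).re| ≤ ‖y j‖ := by simpa using Complex.abs_re_le_norm (y j)
      have hre : (y j).re = x j := congrFun hax j
      rwa [hre] at this
    have hNu : N u ≤ 1 := by rw [hu, ← hNc y]; exact hy
    set s : Fin n → ℝ := fun j => if x j < 0 then -1 else 1 with hs
    have hs1 : ∀ j, |s j| = 1 := by intro j; by_cases h : x j < 0 <;> simp [hs, h]
    have hsx : ∀ j, s j * x j = |x j| := by
      intro j
      by_cases h : x j < 0
      · simp [hs, h, abs_of_neg h]
      · simp [hs, h, abs_of_nonneg (not_lt.mp h)]
    set Y : Fin n → ℝ := fun j => s j * u j with hY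
    set Z : Fin n → ℝ := fun j => 2 * x j - s j * u j with hZ
    have hNY : N Y ≤ 1 := by
      rw [habs Y]
      have : (fun j => |Y j|) = u := by
        funext j; rw [hY]; simp only []
        rw [abs_mul, hs1 j, one_mul, abs_of_nonneg (hu0 j)]
      rw [this]; exact hNu
    have hNZ : N Z ≤ 1 := by
      refine le_trans (mono Z u ?_) hNu
      intro j
      have hss : s j * s j = 1 := by by_cases h : x j < 0 <;> simp [hs, h]
      have h1 : s j * Z j = 2 * |x j| - u j := by
        have hZj : Z j = 2 * x j - s j * u j := rfl
        rw [hZj]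
        linear_combination (2 : ℝ) * hsx j - u j * hss
      have h2 : |Z j| = |2 * |x j| - u j| := by
        rw [← h1, abs_mul, hs1 j, one_mul]
      rw [h2, abs_le]
      constructor <;> nlinarith [hxu j, abs_nonneg (x j)]
    have hYZ : Y + Z = (2 : ℝ) • x := by
      funext j
      simp only [Pi.add_apply, Pi.smul_apply, smul_eq_mul]
      show s j * u j + (2 * x j - s j * u j) = 2 * x j
      ring
    obtain ⟨hYx, _⟩ := hext Y Z hNY hNZ hYZ
    have huabs : ∀ j, u j = |x j| := by
      intro j
      have ht : s j * u j = x j := congrFun hYx j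
      have hss : s j * s j = 1 := by by_cases h : x j < 0 <;> simp [hs, h]
      linear_combination (-(u j)) * hss + s j * ht + hsx j
    -- conclude y j = x j
    have hyx : y = fun j => ((x j : ℝ) : ℂ) := by
      funext j
      have hre : (y j).re = x j := congrFun hax j
      have him : (y j).im = 0 := by
        have h1 : ‖y j‖ ^ 2 = (y j).re ^ 2 + (y j).im ^ 2 := by
          rw [Complex.sq_norm, Complex.normSq_apply]
          ring
        have h2 : ‖y j‖ = |x j| := huabs j
        rw [h2, hre, sq_abs] at h1
        nlinarith
      apply Complex.ext <;> simp [hre, him]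
    refine ⟨hyx, ?_⟩
    funext j
    have hsj := congrFun hsum j
    simp only [Pi.add_apply, Pi.smul_apply, smul_eq_mul] at hsj
    have hyj := congrFun hyx j
    linear_combination hsj - hyj
  · -- backward: complex extreme → real extreme
    intro hext y z hy hz hsum
    set yc : Fin n → ℂ := fun j => ((y j : ℝ) : ℂ) with hyc
    set zc : Fin n → ℂ := fun j => ((z j : ℝ) : ℂ) with hzc
    have hyC : Nc yc ≤ 1 := by
      rw [hNc]
      have : (fun j => ‖yc j‖) = fun j => |y j| := by funext j; simp [hyc]
      rw [this, ← habs]; exact hy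
    have hzC : Nc zc ≤ 1 := by
      rw [hNc]
      have : (fun j => ‖zc j‖) = fun j => |z j| := by funext j; simp [hzc]
      rw [this, ← habs]; exact hz
    have hsC : yc + zc = (2 : ℂ) • (fun j => ((x j : ℝ) : ℂ)) := by
      funext j
      have := congrFun hsum j
      simp only [Pi.add_apply, Pi.smul_apply, smul_eq_mul] at this ⊢
      show ((y j : ℝ) : ℂ) + ((z j : ℝ) : ℂ) = 2 * ((x j : ℝ) : ℂ)
      exact_mod_cast congrArg (fun t : ℝ => (t : ℂ)) this
    obtain ⟨h1, h2⟩ := hext yc zc hyC hzC hsC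
    constructor
    · funext j
      have h : ((y j : ℝ) : ℂ) = ((x j : ℝ) : ℂ) := congrFun h1 j
      exact_mod_cast h
    · funext j
      have h : ((z j : ℝ) : ℂ) = ((x j : ℝ) : ℂ) := congrFun h2 j
      exact_mod_cast h
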